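/- arXiv:2409.11976 — 2 statements merged into one kernel-verified Lean document; each statement's English description precedes it below -/
import Mathlib

section
/- Let α ∈ (0,1), λ > 0, and let w : ℝ^N → ℝ be a C^2 function with finite global α-Hölder seminorm satisfying Δw = λw on ℝ^N. Then w ≡ 0. -/
open MeasureTheory Metric Filter
open scoped ENNReal NNReal RealInnerProductSpace Topology

noncomputable section

abbrev Euc (N : ℕ) := EuclideanSpace ℝ (Fin N)

/-- Laplacian of `f` at `x`. -/
noncomputable def lap {N : ℕ} (f : Euc N → ℝ) (x : Euc N) : ℝ :=
  ∑ i : Fin N, fderiv ℝ (fun y => fderiv ℝ f y (EuclideanSpace.single i 1)) x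
    (EuclideanSpace.single i 1)

noncomputable def gam (N : ℕ) (t : ℝ) : ℝ :=
  Real.sqrt ((((N : ℝ) - 2) / 2) ^ 2 + t) - ((N : ℝ) - 2) / 2

/-- surface measure on the unit sphere of `ℝ^N`. -/
noncomputable def sphMeas (N : ℕ) : Measure (Euc N) :=
  (μH[((N : ℝ) - 1)]).restrict (Metric.sphere (0 : Euc N) 1)

noncomputable def lamMin (N : ℕ) (u : Euc N → ℝ) : ℝ :=
  sInf { c : ℝ | ∃ φ : Euc N → ℝ, ContDiff ℝ 1 φ ∧
    sphMeas N ({x | φ x ≠ 0} ∩ {x | u x = 0}) = 0 ∧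
    0 < ∫ x, (φ x) ^ 2 ∂(sphMeas N) ∧
    c = (∫ x, ‖gradient φ x‖ ^ 2 ∂(sphMeas N)) / (∫ x, (φ x) ^ 2 ∂(sphMeas N)) }

noncomputable def alphaKN (N k : ℕ) : ℝ :=
  sInf { s : ℝ | ∃ u : Fin k → Euc N → ℝ,
    (∀ j, MemLp (u j) 2 (sphMeas N)) ∧
    (∀ j, MemLp (fun x => ‖gradient (u j) x‖) 2 (sphMeas N)) ∧
    (∀ j, ¬ (u j =ᵐ[sphMeas N] 0)) ∧
    (∫ x, ∏ j, (u j x) ^ 2 ∂(sphMeas N)) = 0 ∧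
    s = ∑ j, gam N (lamMin N (u j)) }

end

noncomputable section Aux

lemma second_test {g g' : ℝ → ℝ} {m : ℝ}
    (hg : ∀ t, HasDerivAt g (g' t) t) (hg' : HasDerivAt g' m 0)
    (hmax : ∀ t, g t ≤ g 0) : m ≤ 0 := by
  by_contra hm
  push_neg at hm
  have h0 : g' 0 = 0 := by
    have : IsLocalMax g 0 := IsMaxOn.isLocalMax (fun t _ => hmax t) Filter.univ_mem
    exact this.hasDerivAt_eq_zero (hg 0)
  have hslope := hasDerivAt_iff_tendsto_slope.1 hg'
  have hpos : ∀ᶠ t in 𝓝[>] (0:ℝ), 0 < slope g' 0 t := by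
    have := hslope.mono_left (nhdsWithin_mono _ (by intro t ht; exact ne_of_gt ht))
    exact this.eventually (eventually_gt_nhds hm)
  obtain ⟨δ, hδ, hδpos⟩ := (nhdsGT_basis (0:ℝ)).eventually_iff.1 hpos
  have hg'pos : ∀ t ∈ Set.Ioo (0:ℝ) δ, 0 < g' t := by
    intro t ht
    have hs := hδpos ⟨ht.1, ht.2⟩
    rw [slope_def_field, h0, sub_zero, sub_zero, div_pos_iff] at hs
    rcases hs with ⟨h1, _⟩ | ⟨_, h2⟩
    · exact h1
    · linarith [ht.1]
  have hmono : StrictMonoOn g (Set.Icc 0 δ) := by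
    apply strictMonoOn_of_deriv_pos (convex_Icc _ _)
      (fun t _ => (hg t).continuousAt.continuousWithinAt)
    intro t ht
    rw [interior_Icc] at ht
    rw [(hg t).deriv]
    exact hg'pos t ht
  have : g 0 < g δ := hmono ⟨le_refl _, le_of_lt hδ⟩ ⟨le_of_lt hδ, le_refl _⟩ hδ
  exact absurd (hmax δ) (not_le.2 this)

variable {N : ℕ}

local notation "e" => fun (j : Fin N) => EuclideanSpace.single j (1:ℝ)

lemma proj_single (i j : Fin N) : (EuclideanSpace.proj (𝕜 := ℝ) i) (e j) = if i = j then 1 else 0 := by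
  simp [EuclideanSpace.single_apply]

def qf (x0 : Euc N) (x : Euc N) : ℝ := ∑ i, (x i - x0 i) * (x i - x0 i)

def Dq (x0 y : Euc N) : Euc N →L[ℝ] ℝ :=
  ∑ i, ((y i - x0 i) • (EuclideanSpace.proj i) + (y i - x0 i) • (EuclideanSpace.proj i))

lemma hq_hasFDeriv (x0 y : Euc N) : HasFDerivAt (qf x0) (Dq x0 y) y := by
  apply HasFDerivAt.fun_sum
  intro i _
  have h1 : HasFDerivAt (fun x : Euc N => x i - x0 i) (EuclideanSpace.proj (𝕜 := ℝ) i) y := by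
    exact ((EuclideanSpace.proj (𝕜 := ℝ) i).hasFDerivAt).sub_const (x0 i)
  exact h1.mul h1

lemma Dq_apply (x0 y : Euc N) (j : Fin N) : Dq x0 y (e j) = 2 * (y j - x0 j) := by
  simp only [Dq, ContinuousLinearMap.sum_apply, ContinuousLinearMap.add_apply,
    ContinuousLinearMap.smul_apply, proj_single, smul_eq_mul]
  have h : ∀ i : Fin N, ((y i - x0 i) * (if i = j then (1:ℝ) else 0) + (y i - x0 i) * (if i = j then 1 else 0)) = if i = j then 2*(y i - x0 i) else 0 := by
    intro i; split <;> ring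
  rw [Finset.sum_congr rfl (fun i _ => h i)]
  simp

lemma qf_contDiff (x0 : Euc N) : ContDiff ℝ 2 (qf x0) := by
  apply ContDiff.sum
  intro i _
  have h1 : ContDiff ℝ 2 (fun x : Euc N => x i - x0 i) :=
    ((EuclideanSpace.proj (𝕜 := ℝ) i).contDiff).sub contDiff_const
  exact h1.mul h1

lemma qf_nonneg (x0 x : Euc N) : 0 ≤ qf x0 x :=
  Finset.sum_nonneg fun i _ => mul_self_nonneg _

lemma qf_eq_norm (x0 x : Euc N) : qf x0 x = ‖x - x0‖ ^ 2 := by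
  rw [EuclideanSpace.norm_eq, Real.sq_sqrt (Finset.sum_nonneg fun i _ => by positivity)]
  simp [qf, sq]

lemma key (hN : 1 ≤ N) {α C l : ℝ} (hα : α ∈ Set.Ioo (0:ℝ) 1) (hl : 0 < l)
    (w : Euc N → ℝ) (hw : ContDiff ℝ 2 w) (heq : ∀ x, lap w x = l * w x)
    (hHol : ∀ x y, |w x - w y| ≤ C * ‖x - y‖ ^ α) (x0 : Euc N) : w x0 ≤ 0 := by
  suffices hsuf : ∀ ε > 0, l * w x0 ≤ 2 * N * ε by
    by_contra hpos
    push_neg at hpos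
    have hN' : (0:ℝ) < N := by exact_mod_cast hN
    have h1 := hsuf (l * w x0 / (8 * N)) (by positivity)
    have h2 : 2 * (N:ℝ) * (l * w x0 / (8 * N)) = l * w x0 / 4 := by
      field_simp
      ring
    rw [h2] at h1
    nlinarith [mul_pos hl hpos]
  intro ε hε
  set ψ : Euc N → ℝ := fun x => w x - ε * qf x0 x with hψdef
  have hψcd : ContDiff ℝ 2 ψ := hw.sub (contDiff_const.mul (qf_contDiff x0))
  have hwd : Differentiable ℝ w := hw.differentiable (by norm_num)
  have hψd : Differentiable ℝ ψ := hψcd.differentiable (by norm_num)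
  -- first derivative of ψ
  have hψF : ∀ y, HasFDerivAt ψ (fderiv ℝ w y - ε • Dq x0 y) y := by
    intro y
    have := ((hwd y).hasFDerivAt).sub ((hq_hasFDeriv x0 y).const_mul ε)
    exact this
  have hψF' : ∀ (y : Euc N) (j : Fin N),
      fderiv ℝ ψ y (e j) = fderiv ℝ w y (e j) - ε * (2 * (y j - x0 j)) := by
    intro y j
    rw [(hψF y).fderiv]
    simp [Dq_apply]
  -- C¹ smoothness of directional derivative maps
  have hΦw : ∀ j : Fin N, ContDiff ℝ 1 (fun y => fderiv ℝ w y (e j)) := by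
    intro j
    exact (ContinuousLinearMap.apply ℝ ℝ (e j)).contDiff.comp (hw.fderiv_right (by norm_num))
  have hΦψ : ∀ j : Fin N, ContDiff ℝ 1 (fun y => fderiv ℝ ψ y (e j)) := by
    intro j
    exact (ContinuousLinearMap.apply ℝ ℝ (e j)).contDiff.comp (hψcd.fderiv_right (by norm_num))
  -- second derivative relation
  have hsecond : ∀ (p : Euc N) (j : Fin N),
      fderiv ℝ (fun y => fderiv ℝ ψ y (e j)) p (e j)
        = fderiv ℝ (fun y => fderiv ℝ w y (e j)) p (e j) - 2 * ε := by
    intro p j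
    have hlin : HasFDerivAt (fun y : Euc N => ε * (2 * (y j - x0 j)))
        (ε • (2:ℝ) • (EuclideanSpace.proj (𝕜 := ℝ) j)) p := by
      have h1 : HasFDerivAt (fun x : Euc N => x j - x0 j)
          (EuclideanSpace.proj (𝕜 := ℝ) j) p := by
        exact ((EuclideanSpace.proj (𝕜 := ℝ) j).hasFDerivAt).sub_const (x0 j)
      exact (h1.const_mul 2).const_mul ε
    have hd : HasFDerivAt (fun y => fderiv ℝ ψ y (e j))
        (fderiv ℝ (fun y => fderiv ℝ w y (e j)) p - ε • (2:ℝ) • (EuclideanSpace.proj (𝕜 := ℝ) j)) p := by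
      have h2 : HasFDerivAt (fun y => fderiv ℝ w y (e j))
          (fderiv ℝ (fun y => fderiv ℝ w y (e j)) p) p :=
        ((hΦw j).differentiable (by norm_num) p).hasFDerivAt
      have h3 := h2.sub hlin
      have hfun : (fun y => fderiv ℝ ψ y (e j))
          = fun y => fderiv ℝ w y (e j) - ε * (2 * (y j - x0 j)) := funext fun y => hψF' y j
      rw [hfun]
      exact h3
    rw [hd.fderiv]
    simp [proj_single]
    ring
  -- global max of ψ
  have hnorm : Tendsto (fun x : Euc N => ‖x - x0‖) (cocompact _) atTop := by
    apply tendsto_atTop_mono (fun x => ?_)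
      (tendsto_atTop_add_const_right _ (-‖x0‖) tendsto_norm_cocompact_atTop)
    have := norm_sub_norm_le x x0
    linarith
  have hGaux : Tendsto (fun r : ℝ => ε * r ^ 2 - |C| * r) atTop atTop := by
    apply tendsto_atTop_mono' atTop ?_ tendsto_id
    filter_upwards [eventually_ge_atTop (max 1 ((|C| + 1) / ε))] with r hr
    have hr1 : (1:ℝ) ≤ r := le_trans (le_max_left _ _) hr
    have hr2 : (|C| + 1) / ε ≤ r := le_trans (le_max_right _ _) hr
    have hr3 : |C| + 1 ≤ ε * r := by
      rw [div_le_iff₀ hε] at hr2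
      linarith [hr2]
    simp only [id]
    nlinarith
  have hG : Tendsto (fun r : ℝ => w x0 + (|C| * r - ε * r ^ 2)) atTop atBot := by
    have := tendsto_neg_atTop_atBot.comp hGaux
    have h2 : (fun r : ℝ => w x0 + (|C| * r - ε * r ^ 2))
        = fun r => w x0 + (-(ε * r ^ 2 - |C| * r)) := by funext r; ring
    rw [h2]
    exact tendsto_atBot_add_const_left _ _ this
  have htend : Tendsto ψ (cocompact (Euc N)) atBot := by
    apply tendsto_atBot_mono' _ ?_ (hG.comp hnorm)
    filter_upwards [hnorm.eventually (eventually_ge_atTop 1)] with x hx1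
    have hrnn : (0:ℝ) ≤ ‖x - x0‖ := norm_nonneg _
    have hrw : w x ≤ w x0 + C * ‖x - x0‖ ^ α := by
      have := hHol x x0
      have h2 := le_abs_self (w x - w x0)
      linarith
    have hpow : C * ‖x - x0‖ ^ α ≤ |C| * ‖x - x0‖ := by
      have h1 : C * ‖x - x0‖ ^ α ≤ |C| * ‖x - x0‖ ^ α :=
        mul_le_mul_of_nonneg_right (le_abs_self C) (Real.rpow_nonneg hrnn α)
      have h2 : ‖x - x0‖ ^ α ≤ ‖x - x0‖ := by
        have := Real.rpow_le_rpow_of_exponent_le hx1 (le_of_lt hα.2)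
        rwa [Real.rpow_one] at this
      have h3 : |C| * ‖x - x0‖ ^ α ≤ |C| * ‖x - x0‖ :=
        mul_le_mul_of_nonneg_left h2 (abs_nonneg C)
      linarith
    show ψ x ≤ w x0 + (|C| * ‖x - x0‖ - ε * ‖x - x0‖ ^ 2)
    have hq : qf x0 x = ‖x - x0‖ ^ 2 := qf_eq_norm x0 x
    simp only [hψdef]
    rw [hq]
    linarith
  obtain ⟨p, hp⟩ := hψcd.continuous.exists_forall_ge htend
  -- second derivative test at p
  have hm : ∀ j : Fin N, fderiv ℝ (fun y => fderiv ℝ ψ y (e j)) p (e j) ≤ 0 := by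
    intro j
    set L : ℝ → Euc N := fun t => p + t • (e j) with hL
    have hL0 : L 0 = p := by simp [hL]
    have hLd : ∀ t, HasDerivAt L (e j) t := by
      intro t
      simpa [hL] using ((hasDerivAt_id t).smul_const (e j)).const_add p
    have hg : ∀ t, HasDerivAt (fun t => ψ (L t)) (fderiv ℝ ψ (L t) (e j)) t := by
      intro t
      exact ((hψd (L t)).hasFDerivAt).comp_hasDerivAt t (hLd t)
    have hg' : HasDerivAt (fun t => fderiv ℝ ψ (L t) (e j))
        (fderiv ℝ (fun y => fderiv ℝ ψ y (e j)) p (e j)) 0 := by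
      have h2 : HasFDerivAt (fun y => fderiv ℝ ψ y (e j))
          (fderiv ℝ (fun y => fderiv ℝ ψ y (e j)) p) (L 0) := by
        rw [hL0]
        exact ((hΦψ j).differentiable (by norm_num) p).hasFDerivAt
      have h3 := h2.comp_hasDerivAt 0 (hLd 0)
      exact h3
    have hmax : ∀ t, ψ (L t) ≤ ψ (L 0) := by
      intro t
      rw [hL0]
      exact hp (L t)
    exact second_test hg hg' hmax
  -- combine
  have hlap : lap ψ p ≤ 0 := Finset.sum_nonpos fun j _ => hm j
  have hlapw : lap w p = lap ψ p + 2 * N * ε := by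
    simp only [lap]
    rw [Finset.sum_congr rfl (fun j _ => hsecond p j)]
    rw [Finset.sum_sub_distrib]
    simp
    ring
  have hwp : l * w p ≤ 2 * N * ε := by
    rw [← heq p, hlapw]
    linarith
  have hψx0 : ψ x0 = w x0 := by simp [hψdef, qf]
  have hwx0 : w x0 ≤ w p := by
    have h1 := hp x0
    rw [hψx0] at h1
    have h2 : ψ p ≤ w p := by
      simp only [hψdef]
      have := qf_nonneg x0 p
      nlinarith
    linarith
  calc l * w x0 ≤ l * w p := by nlinarith
    _ ≤ 2 * N * ε := hwp

lemma lap_neg {N : ℕ} (w : Euc N → ℝ) (y : Euc N) : lap (fun z => -w z) y = -lap w y := by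
  unfold lap
  rw [← Finset.sum_neg_distrib]
  apply Finset.sum_congr rfl
  intro j _
  have hfun : (fun y => fderiv ℝ (fun z => -w z) y (EuclideanSpace.single j 1))
      = fun y => -((fun y => fderiv ℝ w y (EuclideanSpace.single j 1)) y) := by
    funext y
    rw [fderiv_fun_neg]
    simp
  rw [hfun, fderiv_fun_neg]
  simp

end Aux

/-- A `C^2` function on `ℝ^N` with finite global `α`-Hölder seminorm solving
`Δw = λw` with `λ > 0` vanishes identically. -/
theorem stmt9 (N : ℕ) (hN : 1 ≤ N) (α : ℝ) (hα : α ∈ Set.Ioo (0 : ℝ) 1)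
    (l : ℝ) (hl : 0 < l)
    (w : Euc N → ℝ) (hw : ContDiff ℝ 2 w) (heq : ∀ x, lap w x = l * w x)
    (hHol : ∃ C : ℝ, ∀ x y, |w x - w y| ≤ C * ‖x - y‖ ^ α) :
    ∀ x, w x = 0 := by
  obtain ⟨C, hC⟩ := hHol
  intro x
  have h1 : w x ≤ 0 := key hN hα hl w hw heq hC x
  have h2 : -w x ≤ 0 := by
    apply key hN hα hl (fun z => -w z) hw.neg
    · intro y
      rw [lap_neg, heq]
      ring
    · intro a b
      have : -w a - -w b = -(w a - w b) := by ring
      rw [this, abs_neg]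
      exact hC a b
  linarith
end

section
/- Let H ⊂ ℝ^N be an open half-space and let v be continuous on the closure of H, harmonic in H, constant on ∂H, and globally α-Hölder continuous on H for some α ∈ (0,1). Then v is constant on H. -/
open MeasureTheory Metric Filter
open scoped ENNReal NNReal RealInnerProductSpace Topology

lemma fderiv_const_sub' {N : ℕ} (v : Euc N → ℝ) (a : ℝ) (y : Euc N) :
    fderiv ℝ (fun x => a - v x) y = -fderiv ℝ v y := by
  by_cases h : DifferentiableAt ℝ v y
  · rw [((hasFDerivAt_const a y).fun_sub h.hasFDerivAt).fderiv]
    simp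
  · have h2 : ¬ DifferentiableAt ℝ (fun x => a - v x) y := by
      intro hh
      exact h (by simpa using (differentiableAt_const a).sub hh)
    rw [fderiv_zero_of_not_differentiableAt h, fderiv_zero_of_not_differentiableAt h2, neg_zero]

lemma lap_const_sub {N : ℕ} (v : Euc N → ℝ) (a : ℝ) (z : Euc N) :
    lap (fun x => a - v x) z = - lap v z := by
  unfold lap
  rw [← Finset.sum_neg_distrib]
  apply Finset.sum_congr rfl
  intro i _
  have h1 : (fun y => fderiv ℝ (fun x => a - v x) y (EuclideanSpace.single i 1))
      = fun y => (0:ℝ) - fderiv ℝ v y (EuclideanSpace.single i 1) := by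
    funext y
    rw [fderiv_const_sub']
    simp
  rw [h1, fderiv_const_sub']
  simp

section model
variable {N : ℕ} (v Φ : Euc N → ℝ) (DΦ : Euc N → (Euc N →L[ℝ] ℝ)) (z : Euc N)

lemma model_core (hΦ : ∀ x, HasFDerivAt Φ (DΦ x) x)
    (hD : ∀ i : Fin N, DifferentiableAt ℝ (fun y => DΦ y (EuclideanSpace.single i 1)) z)
    (hv : ∀ᶠ y in 𝓝 z, DifferentiableAt ℝ v y)
    (hv2 : ∀ i : Fin N, DifferentiableAt ℝ
      (fun y => fderiv ℝ v y (EuclideanSpace.single i 1)) z) :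
    (∀ᶠ y in 𝓝 z, DifferentiableAt ℝ (fun x => v x + Φ x) y) ∧
    (∀ i : Fin N, DifferentiableAt ℝ (fun y => fderiv ℝ (fun x => v x + Φ x) y
        (EuclideanSpace.single i 1)) z) ∧
    lap (fun x => v x + Φ x) z
      = lap v z + ∑ i : Fin N, fderiv ℝ (fun y => DΦ y (EuclideanSpace.single i 1)) z
          (EuclideanSpace.single i 1) := by
  have hdiff : ∀ᶠ y in 𝓝 z, DifferentiableAt ℝ (fun x => v x + Φ x) y := by
    filter_upwards [hv] with y hy
    exact hy.add (hΦ y).differentiableAt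
  have hEq : ∀ i : Fin N,
      (fun y => fderiv ℝ (fun x => v x + Φ x) y (EuclideanSpace.single i 1)) =ᶠ[𝓝 z]
      (fun y => fderiv ℝ v y (EuclideanSpace.single i 1) + DΦ y (EuclideanSpace.single i 1)) := by
    intro i
    filter_upwards [hv] with y hy
    rw [fderiv_fun_add hy (hΦ y).differentiableAt, ContinuousLinearMap.add_apply, (hΦ y).fderiv]
  have hd2 : ∀ i : Fin N, DifferentiableAt ℝ
      (fun y => fderiv ℝ v y (EuclideanSpace.single i 1) + DΦ y (EuclideanSpace.single i 1)) z :=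
    fun i => (hv2 i).add (hD i)
  refine ⟨hdiff, fun i => ?_, ?_⟩
  · exact (hd2 i).congr_of_eventuallyEq (hEq i)
  · unfold lap
    rw [← Finset.sum_add_distrib]
    apply Finset.sum_congr rfl
    intro i _
    rw [(hEq i).fderiv_eq, fderiv_fun_add (hv2 i) (hD i), ContinuousLinearMap.add_apply]
end model

section concrete
variable {N : ℕ}

lemma inner_right_hasFDerivAt (b x : Euc N) :
    HasFDerivAt (fun y : Euc N => ⟪y, b⟫) (innerSL ℝ b) x := by
  have h := (innerSL ℝ b).hasFDerivAt (x := x)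
  exact h.congr_of_eventuallyEq (Filter.Eventually.of_forall fun y => by
    simp [mul_comm, real_inner_comm])

noncomputable def Phi (x₀ e : Euc N) (κ a₂ a₁ a₀ : ℝ) : Euc N → ℝ :=
  fun x => κ * ⟪x - x₀, x - x₀⟫ + (a₂ * (⟪x, e⟫ * ⟪x, e⟫) + a₁ * ⟪x, e⟫ + a₀)

noncomputable def DPhi (x₀ e : Euc N) (κ a₂ a₁ : ℝ) : Euc N → (Euc N →L[ℝ] ℝ) :=
  fun x => (2*κ) • (innerSL ℝ (x - x₀)) + (2*a₂*⟪x,e⟫ + a₁) • (innerSL ℝ e)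

lemma hasFDerivAt_Phi (x₀ e : Euc N) (κ a₂ a₁ a₀ : ℝ) (x : Euc N) :
    HasFDerivAt (Phi x₀ e κ a₂ a₁ a₀) (DPhi x₀ e κ a₂ a₁ x) x := by
  have hsub : HasFDerivAt (fun y : Euc N => y - x₀) (ContinuousLinearMap.id ℝ (Euc N)) x :=
    (hasFDerivAt_id x).sub_const x₀
  have h2 := (hsub.inner ℝ hsub).const_mul κ
  have h3 := ((inner_right_hasFDerivAt e x).mul (inner_right_hasFDerivAt e x)).const_mul a₂
  have h4 := (inner_right_hasFDerivAt e x).const_mul a₁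
  have h6 := h2.add ((h3.add h4).add_const a₀)
  refine h6.congr_fderiv ?_
  ext w
  simp [DPhi, fderivInnerCLM_apply, innerSL_apply_apply, smul_eq_mul, real_inner_comm,
    sub_mul, mul_sub, Finset.sum_sub_distrib, mul_comm]
  rw [inner_sub_right, real_inner_comm w x, real_inner_comm w x₀]
  ring

lemma DPhi_apply (x₀ e : Euc N) (κ a₂ a₁ : ℝ) (x w : Euc N) :
    DPhi x₀ e κ a₂ a₁ x w = 2*κ*⟪x - x₀, w⟫ + (2*a₂*⟪x,e⟫ + a₁) * ⟪e, w⟫ := by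
  simp [DPhi, innerSL_apply_apply, smul_eq_mul, sub_mul, mul_sub, Finset.sum_sub_distrib, mul_comm, inner_sub_left]

lemma hasFDerivAt_DPhi_apply (x₀ e : Euc N) (κ a₂ a₁ : ℝ) (w x : Euc N) :
    HasFDerivAt (fun y => DPhi x₀ e κ a₂ a₁ y w)
      ((2*κ) • (innerSL ℝ w) + (2*a₂*⟪e,w⟫) • (innerSL ℝ e)) x := by
  have hsub : HasFDerivAt (fun y : Euc N => y - x₀) (ContinuousLinearMap.id ℝ (Euc N)) x :=
    (hasFDerivAt_id x).sub_const x₀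
  have t1 := (hsub.inner ℝ (hasFDerivAt_const w x)).const_mul (2*κ)
  have t2 := (((inner_right_hasFDerivAt e x).const_mul (2*a₂)).add_const a₁).mul_const (⟪e,w⟫)
  have h := t1.add t2
  have heq : (fun y => DPhi x₀ e κ a₂ a₁ y w)
      = (fun y : Euc N => 2*κ*⟪y - x₀, w⟫ + (2*a₂*⟪y,e⟫ + a₁) * ⟪e, w⟫) := by
    funext y; exact DPhi_apply x₀ e κ a₂ a₁ y w
  rw [heq]
  refine h.congr_fderiv ?_
  ext u
  simp [fderivInnerCLM_apply, innerSL_apply_apply, smul_eq_mul, real_inner_comm,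
    sub_mul, mul_sub, Finset.sum_sub_distrib, mul_comm]
  ring

lemma sum_DPhi (x₀ e : Euc N) (κ a₂ a₁ : ℝ) (z : Euc N) :
    ∑ i : Fin N, fderiv ℝ (fun y => DPhi x₀ e κ a₂ a₁ y (EuclideanSpace.single i 1)) z
      (EuclideanSpace.single i 1) = 2*N*κ + 2*a₂*⟪e,e⟫ := by
  have hval : ∀ i : Fin N, fderiv ℝ (fun y => DPhi x₀ e κ a₂ a₁ y (EuclideanSpace.single i 1)) z
      (EuclideanSpace.single i 1)
      = 2*κ*⟪(EuclideanSpace.single i (1:ℝ)), EuclideanSpace.single i (1:ℝ)⟫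
        + 2*a₂*(⟪e, EuclideanSpace.single i (1:ℝ)⟫ * ⟪e, EuclideanSpace.single i (1:ℝ)⟫) := by
    intro i
    rw [(hasFDerivAt_DPhi_apply x₀ e κ a₂ a₁ (EuclideanSpace.single i 1) z).fderiv]
    simp [innerSL_apply_apply, smul_eq_mul]
    ring
  rw [Finset.sum_congr rfl (fun i _ => hval i)]
  rw [Finset.sum_add_distrib]
  have h1 : ∀ i : Fin N, ⟪(EuclideanSpace.single i (1:ℝ)), EuclideanSpace.single i (1:ℝ)⟫ = (1:ℝ) := by
    intro i
    rw [EuclideanSpace.inner_single_left]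
    simp [EuclideanSpace.single_apply]
  have h2 : ∀ i : Fin N, ⟪e, EuclideanSpace.single i (1:ℝ)⟫ = e i := by
    intro i
    rw [EuclideanSpace.inner_single_right]
    simp
  have h3 : ⟪e, e⟫ = ∑ i : Fin N, e i * e i := by
    rw [PiLp.inner_apply]
    simp [RCLike.inner_apply, conj_trivial]
    exact Finset.sum_congr rfl (fun i _ => sq _)
  simp only [h1, h2]
  rw [Finset.sum_const, ← Finset.mul_sum]
  rw [h3]; simp
  ring
end concrete

lemma sdtest {φ p : ℝ → ℝ} {A : ℝ} (hmax : IsLocalMax φ 0)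
    (hp : ∀ᶠ s in 𝓝 (0:ℝ), HasDerivAt φ (p s) s) (hA : HasDerivAt p A 0) :
    A ≤ 0 := by
  by_contra hA'
  push_neg at hA'
  have hp0 : p 0 = 0 := hmax.hasDerivAt_eq_zero hp.self_of_nhds
  have hslope := hasDerivAt_iff_tendsto_slope.1 hA
  have h1 : ∀ᶠ s in 𝓝[>] (0:ℝ), 0 < p s := by
    have h2 : ∀ᶠ s in 𝓝[≠] (0:ℝ), 0 < slope p 0 s :=
      hslope.eventually (eventually_gt_nhds hA')
    have h3 : ∀ᶠ s in 𝓝[>] (0:ℝ), 0 < slope p 0 s :=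
      h2.filter_mono (nhdsWithin_mono _ (fun x hx => ne_of_gt hx))
    filter_upwards [h3, self_mem_nhdsWithin] with s hs hs0
    have : slope p 0 s = p s / s := by simp [slope_def_field, hp0]
    rw [this] at hs
    have := mul_pos hs (show (0:ℝ) < s from hs0)
    rwa [div_mul_cancel₀] at this
    exact ne_of_gt hs0
  -- get concrete intervals
  obtain ⟨δ₁, hδ₁, hball⟩ := Metric.eventually_nhds_iff.1 hp
  have h4 : ∀ᶠ s in 𝓝[>] (0:ℝ), 0 < p s ∧ φ s ≤ φ 0 :=
    h1.and (hmax.filter_mono nhdsWithin_le_nhds)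
  obtain ⟨u, hu, hIoo⟩ := mem_nhdsGT_iff_exists_Ioo_subset.1 h4
  have hu : (0:ℝ) < u := hu
  set b := min (u/2) (δ₁/2) with hb
  have hb0 : 0 < b := by
    apply lt_min
    · exact half_pos hu
    · exact half_pos hδ₁
  have hbu : b < u := lt_of_le_of_lt (min_le_left _ _) (by linarith [hu])
  have hbδ : b < δ₁ := lt_of_le_of_lt (min_le_right _ _) (by linarith [hδ₁])
  have hder : ∀ s ∈ Set.Icc (0:ℝ) b, HasDerivAt φ (p s) s := by
    intro s hs
    apply hball
    rw [Real.dist_eq, sub_zero, abs_of_nonneg hs.1]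
    exact lt_of_le_of_lt hs.2 hbδ
  have hmono : StrictMonoOn φ (Set.Icc (0:ℝ) b) := by
    apply strictMonoOn_of_deriv_pos (convex_Icc _ _)
    · intro s hs
      exact (hder s hs).continuousAt.continuousWithinAt
    · intro s hs
      rw [interior_Icc] at hs
      rw [(hder s ⟨hs.1.le, hs.2.le⟩).deriv]
      exact (hIoo ⟨hs.1, lt_trans hs.2 hbu⟩).1
  have hlt : φ 0 < φ b := hmono ⟨le_refl 0, hb0.le⟩ ⟨hb0.le, le_refl b⟩ hb0
  have hle : φ b ≤ φ 0 := (hIoo ⟨hb0, hbu⟩).2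
  linarith

lemma maxp {N : ℕ} (g : Euc N → ℝ) (Ω : Set (Euc N)) (hΩo : IsOpen Ω)
    (hΩb : Bornology.IsBounded Ω) (x₀ : Euc N) (hx₀ : x₀ ∈ Ω)
    (hg : ContinuousOn g (closure Ω))
    (hdiff : ∀ z ∈ Ω, ∀ᶠ y in 𝓝 z, DifferentiableAt ℝ g y)
    (hdiff2 : ∀ z ∈ Ω, ∀ i : Fin N, DifferentiableAt ℝ
        (fun y => fderiv ℝ g y (EuclideanSpace.single i 1)) z)
    (hlap : ∀ z ∈ Ω, 0 < lap g z)
    (bound : ℝ) (hbd : ∀ z ∈ closure Ω \ Ω, g z ≤ bound) :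
    g x₀ ≤ bound := by
  have hcomp : IsCompact (closure Ω) := hΩb.isCompact_closure
  obtain ⟨z, hz, hzmax⟩ := hcomp.exists_isMaxOn ⟨x₀, subset_closure hx₀⟩ hg
  by_cases hzΩ : z ∈ Ω
  · exfalso
    have hnhds : closure Ω ∈ 𝓝 z := Filter.mem_of_superset (hΩo.mem_nhds hzΩ) subset_closure
    have hloc : IsLocalMax g z := hzmax.isLocalMax hnhds
    have hkey : ∀ i : Fin N, fderiv ℝ (fun y => fderiv ℝ g y (EuclideanSpace.single i 1)) z
        (EuclideanSpace.single i 1) ≤ 0 := by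
      intro i
      set w := EuclideanSpace.single i (1:ℝ) with hw
      have hline : ∀ s : ℝ, HasDerivAt (fun s : ℝ => z + s • w) w s := by
        intro s
        have h1 : HasDerivAt (fun s : ℝ => s • w) ((1:ℝ) • w) s := (hasDerivAt_id s).smul_const w
        rw [one_smul] at h1
        exact h1.const_add z
      have htend : Filter.Tendsto (fun s : ℝ => z + s • w) (𝓝 0) (𝓝 z) := by
        have h2 := (hline 0).continuousAt.tendsto
        simpa using h2
      apply sdtest (φ := fun s => g (z + s • w)) (p := fun s => fderiv ℝ g (z + s • w) w)
      · have h3 := htend.eventually hloc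
        simp only [IsLocalMax, IsMaxFilter] at h3 ⊢
        simpa using h3
      · have hev := htend.eventually (hdiff z hzΩ)
        filter_upwards [hev] with s hs
        exact hs.hasFDerivAt.comp_hasDerivAt s (hline s)
      · have hd : HasFDerivAt (fun y => fderiv ℝ g y w)
            (fderiv ℝ (fun y => fderiv ℝ g y w) z) (z + (0:ℝ) • w) := by
          simpa using (hdiff2 z hzΩ i).hasFDerivAt
        exact hd.comp_hasDerivAt 0 (hline 0)
    have hpos := hlap z hzΩ
    have hsum : lap g z ≤ 0 := by
      unfold lap
      exact Finset.sum_nonpos (fun i _ => hkey i)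
    linarith
  · exact le_trans (hzmax (subset_closure hx₀)) (hbd z ⟨hz, hzΩ⟩)

set_option maxHeartbeats 1600000 in
lemma key_s10 {N : ℕ} (hN : 1 ≤ N) {α : ℝ} (hα : α ∈ Set.Ioo (0:ℝ) 1)
    (e : Euc N) (he : ‖e‖ = 1) (c : ℝ) (v : Euc N → ℝ)
    (hcont : ContinuousOn v (closure {x : Euc N | c < ⟪x, e⟫}))
    (hsm : ContDiffOn ℝ 2 v {x : Euc N | c < ⟪x, e⟫})
    (hharm : ∀ x ∈ {x : Euc N | c < ⟪x, e⟫}, lap v x = 0)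
    (d : ℝ) (hbdry : ∀ x : Euc N, ⟪x, e⟫ = c → v x = d)
    (C : ℝ) (hC : 0 ≤ C)
    (hHol : ∀ x ∈ {x : Euc N | c < ⟪x, e⟫}, ∀ y ∈ {x : Euc N | c < ⟪x, e⟫},
      v x - v y ≤ C * ‖x - y‖ ^ α)
    (x₀ : Euc N) (hx₀ : c < ⟪x₀, e⟫) : v x₀ ≤ d := by
  have hN' : (1:ℝ) ≤ (N:ℝ) := by exact_mod_cast hN
  have hee : ⟪e, e⟫ = (1:ℝ) := by
    rw [real_inner_self_eq_norm_mul_norm, he]; norm_num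
  have hconte : Continuous (fun x : Euc N => ⟪x, e⟫) :=
    continuous_id.inner continuous_const
  have hHopen : IsOpen {x : Euc N | c < ⟪x, e⟫} := isOpen_lt continuous_const hconte
  have hdiffv : ∀ z ∈ {x : Euc N | c < ⟪x, e⟫}, ∀ᶠ y in 𝓝 z, DifferentiableAt ℝ v y := by
    intro z hz
    filter_upwards [hHopen.mem_nhds hz] with y hy
    exact (hsm.differentiableOn (by norm_num)).differentiableAt (hHopen.mem_nhds hy)
  have hdiffv2 : ∀ z ∈ {x : Euc N | c < ⟪x, e⟫}, ∀ i : Fin N,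
      DifferentiableAt ℝ (fun y => fderiv ℝ v y (EuclideanSpace.single i 1)) z := by
    intro z hz i
    have h1 : ContDiffAt ℝ 2 v z := hsm.contDiffAt (hHopen.mem_nhds hz)
    have h2 : ContDiffAt ℝ 1 (fderiv ℝ v) z := h1.fderiv_right (m := 1) (by norm_num)
    exact (h2.differentiableAt (by norm_num)).clm_apply (differentiableAt_const _)
  -- Step A : Hölder up to the boundary
  have stepA : ∀ x : Euc N, c < ⟪x, e⟫ → v x - d ≤ C * (⟪x, e⟫ - c) ^ α := by
    intro x hx
    have ht : 0 < ⟪x, e⟫ - c := sub_pos.2 hx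
    set p := x - (⟪x, e⟫ - c) • e with hpdef
    have hpe : ⟪p, e⟫ = c := by
      rw [hpdef, inner_sub_left, real_inner_smul_left, hee]; ring
    have hvp : v p = d := hbdry p hpe
    have hmem : ∀ s : ℝ, 0 < s → p + s • e ∈ {x : Euc N | c < ⟪x, e⟫} := by
      intro s hs
      have h1 : ⟪p + s • e, e⟫ = c + s := by
        rw [inner_add_left, real_inner_smul_left, hee, hpe]; ring
      simp only [Set.mem_setOf_eq, h1]; linarith
    have hxp : ∀ s : ℝ, x - (p + s • e) = ((⟪x, e⟫ - c) - s) • e := by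
      intro s
      rw [hpdef]
      have h9 : x - (x - (⟪x, e⟫ - c) • e + s • e) = (⟪x, e⟫ - c) • e - s • e := by abel
      rw [h9, ← sub_smul]
    have htend1 : Filter.Tendsto (fun s : ℝ => p + s • e) (𝓝[>] 0) (𝓝 p) := by
      have h1 : Continuous (fun s : ℝ => p + s • e) :=
        continuous_const.add (continuous_id.smul continuous_const)
      have h2 := h1.tendsto 0
      simp only [zero_smul, add_zero] at h2
      exact h2.mono_left nhdsWithin_le_nhds
    have hpc : p ∈ closure {x : Euc N | c < ⟪x, e⟫} := by
      apply mem_closure_of_tendsto htend1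
      filter_upwards [self_mem_nhdsWithin] with s hs
      exact hmem s hs
    have htendH : Filter.Tendsto (fun s : ℝ => p + s • e) (𝓝[>] 0)
        (𝓝[closure {x : Euc N | c < ⟪x, e⟫}] p) := by
      rw [tendsto_nhdsWithin_iff]
      refine ⟨htend1, ?_⟩
      filter_upwards [self_mem_nhdsWithin] with s hs
      exact subset_closure (hmem s hs)
    have hlimv : Filter.Tendsto (fun s : ℝ => v (p + s • e)) (𝓝[>] 0) (𝓝 d) := by
      have h2 := (hcont p hpc).tendsto
      rw [hvp] at h2
      exact h2.comp htendH
    have hlimr : Filter.Tendsto (fun s : ℝ => C * ‖x - (p + s • e)‖ ^ α) (𝓝[>] 0)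
        (𝓝 (C * (⟪x, e⟫ - c) ^ α)) := by
      have hnorm : (fun s : ℝ => C * ‖x - (p + s • e)‖ ^ α)
          = fun s : ℝ => C * |(⟪x, e⟫ - c) - s| ^ α := by
        funext s
        rw [hxp s, norm_smul, he, mul_one, Real.norm_eq_abs]
      rw [hnorm]
      have habs : Filter.Tendsto (fun s : ℝ => |(⟪x, e⟫ - c) - s|) (𝓝[>] 0)
          (𝓝 (⟪x, e⟫ - c)) := by
        have h1 : Continuous (fun s : ℝ => |(⟪x, e⟫ - c) - s|) :=
          (continuous_const.sub continuous_id).abs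
        have h2 := h1.tendsto 0
        simp only [sub_zero] at h2
        rw [abs_of_pos ht] at h2
        exact h2.mono_left nhdsWithin_le_nhds
      have hrpow : ContinuousAt (fun r : ℝ => r ^ α) (⟪x, e⟫ - c) :=
        Real.continuousAt_rpow_const _ _ (Or.inl ht.ne')
      exact (hrpow.tendsto.comp habs).const_mul C
    have hineq : ∀ᶠ s in 𝓝[>] (0:ℝ),
        v x - v (p + s • e) ≤ C * ‖x - (p + s • e)‖ ^ α := by
      filter_upwards [self_mem_nhdsWithin] with s hs
      exact hHol x hx _ (hmem s hs)
    exact le_of_tendsto_of_tendsto (tendsto_const_nhds.sub hlimv) hlimr hineq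
  -- Step B
  have stepB : ∀ ε : ℝ, 0 < ε → ∀ t : ℝ, ((C+1)/ε) ^ (1/(1-α)) ≤ t → C * t ^ α ≤ ε * t := by
    intro ε hε t hTt
    have hb : 0 < (C+1)/ε := div_pos (by linarith) hε
    have hT0 : 0 < ((C+1)/ε) ^ (1/(1-α)) := Real.rpow_pos_of_pos hb _
    have ht0 : 0 < t := lt_of_lt_of_le hT0 hTt
    have h1α : 0 < 1 - α := by have := hα.2; linarith
    have h1 : (((C+1)/ε) ^ (1/(1-α))) ^ (1-α) = (C+1)/ε := by
      rw [← Real.rpow_mul hb.le, one_div, inv_mul_cancel₀ (ne_of_gt h1α), Real.rpow_one]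
    have h2 : (C+1)/ε ≤ t ^ (1-α) := by
      rw [← h1]; exact Real.rpow_le_rpow hT0.le hTt h1α.le
    have h3 : (0:ℝ) ≤ t ^ α := Real.rpow_nonneg ht0.le α
    have h4 : t ^ (1-α) * t ^ α = t := by
      rw [← Real.rpow_add ht0]; norm_num
    calc C * t ^ α ≤ (C+1) * t ^ α := by linarith [h3]
      _ = ε * ((C+1)/ε * t ^ α) := by field_simp
      _ ≤ ε * (t ^ (1-α) * t ^ α) :=
          mul_le_mul_of_nonneg_left (mul_le_mul_of_nonneg_right h2 h3) hε.le
      _ = ε * t := by rw [h4]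
  -- main estimate
  have main : ∀ ε : ℝ, 0 < ε → v x₀ - d ≤ ε * (⟪x₀, e⟫ - c) := by
    intro ε hε
    by_cases hcase : ((C+1)/ε) ^ (1/(1-α)) ≤ ⟪x₀, e⟫ - c
    · have h1 := stepA x₀ hx₀
      have h2 := stepB ε hε _ hcase
      linarith
    · push_neg at hcase
      set T := ((C+1)/ε) ^ (1/(1-α)) with hTdef
      have ht₀ : 0 < ⟪x₀, e⟫ - c := sub_pos.2 hx₀
      have hT0 : 0 < T := Real.rpow_pos_of_pos (div_pos (by linarith) hε) _
      have hTα : (0:ℝ) ≤ C * T ^ α := mul_nonneg hC (Real.rpow_nonneg hT0.le α)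
      set M := C * T ^ α + 1 with hMdef
      have hM0 : 0 < M := by linarith
      have hδb : ∀ δ : ℝ, 0 < δ → v x₀ - d - ε * (⟪x₀, e⟫ - c) ≤ δ := by
        intro δ hδ
        set D := M * N * T^2 / δ + 1 with hDdef
        have hD0 : 0 < D := by positivity
        set R := Real.sqrt (T^2 + D) with hRdef
        have hR2 : R^2 = T^2 + D := Real.sq_sqrt (by positivity)
        have hR0 : 0 < R := Real.sqrt_pos.2 (by positivity)
        set η := M / D with hηdef
        have hη : 0 < η := div_pos hM0 hD0
        have hηD : η * (R^2 - T^2) = M := by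
          rw [hR2]
          have h9 : T^2 + D - T^2 = D := by ring
          rw [h9, hηdef, div_mul_cancel₀ _ (ne_of_gt hD0)]
        set Ω := ({x : Euc N | c < ⟪x, e⟫} ∩ {x : Euc N | ⟪x, e⟫ - c < T})
            ∩ Metric.ball x₀ R with hΩdef
        have hΩopen : IsOpen Ω :=
          (hHopen.inter (isOpen_lt (hconte.sub continuous_const) continuous_const)).inter
            Metric.isOpen_ball
        have hΩb : Bornology.IsBounded Ω :=
          Metric.isBounded_ball.subset Set.inter_subset_right
        have hx₀Ω : x₀ ∈ Ω := ⟨⟨hx₀, hcase⟩, Metric.mem_ball_self hR0⟩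
        have hΩH : Ω ⊆ {x : Euc N | c < ⟪x, e⟫} := fun y hy => hy.1.1
        have hclH : ∀ z ∈ closure Ω, 0 ≤ ⟪z, e⟫ - c := by
          intro z hz
          have h1 : closure Ω ⊆ {x : Euc N | c ≤ ⟪x, e⟫} :=
            closure_minimal (fun y hy => show c ≤ ⟪y, e⟫ from le_of_lt hy.1.1)
              (isClosed_le continuous_const hconte)
          exact sub_nonneg.2 (h1 hz)
        have hclT : ∀ z ∈ closure Ω, ⟪z, e⟫ - c ≤ T := by
          intro z hz
          have h1 : closure Ω ⊆ {x : Euc N | ⟪x, e⟫ - c ≤ T} :=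
            closure_minimal (fun y hy => show ⟪y, e⟫ - c ≤ T from le_of_lt hy.1.2)
              (isClosed_le (hconte.sub continuous_const) continuous_const)
          exact h1 hz
        have hclB : ∀ z ∈ closure Ω, ‖z - x₀‖ ≤ R := by
          intro z hz
          have h1 : closure Ω ⊆ Metric.closedBall x₀ R :=
            closure_minimal (fun y hy => Metric.ball_subset_closedBall hy.2)
              Metric.isClosed_closedBall
          have h2 := h1 hz
          rw [Metric.mem_closedBall, dist_eq_norm] at h2
          exact h2
        have hclcl : closure Ω ⊆ closure {x : Euc N | c < ⟪x, e⟫} := closure_mono hΩH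
        have hσstep : ∀ σ : ℝ, 0 < σ →
            v x₀ - d - ε * (⟪x₀, e⟫ - c)
              - η * (((N:ℝ)-1)*T^2 - ((N:ℝ)-1)*(⟪x₀, e⟫ - c)^2) ≤ σ * R^2 := by
          intro σ hσ0
          set κ := σ - η with hκdef
          set a₂ := η * (N:ℝ) with ha₂def
          set a₁ := -ε - 2*η*⟪x₀, e⟫ - 2*η*((N:ℝ)-1)*c with ha₁def
          set a₀ := -d + ε*c + η*⟪x₀, e⟫^2 + η*((N:ℝ)-1)*c^2 - η*((N:ℝ)-1)*T^2 with ha₀def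
          set g := fun x => v x + Phi x₀ e κ a₂ a₁ a₀ x with hgdef
          have hgsem : ∀ x : Euc N, g x = (v x - d - ε*(⟪x, e⟫ - c))
              - η*(⟪x - x₀, x - x₀⟫ - (⟪x, e⟫ - ⟪x₀, e⟫)^2
                  - ((N:ℝ)-1)*(⟪x, e⟫ - c)^2 + ((N:ℝ)-1)*T^2)
              + σ*⟪x - x₀, x - x₀⟫ := by
            intro x
            simp only [hgdef, Phi, hκdef, ha₂def, ha₁def, ha₀def]
            ring
          have hmodel : ∀ z ∈ Ω,
              (∀ᶠ y in 𝓝 z, DifferentiableAt ℝ g y) ∧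
              (∀ i : Fin N, DifferentiableAt ℝ
                (fun y => fderiv ℝ g y (EuclideanSpace.single i 1)) z) ∧
              lap g z = lap v z + ∑ i : Fin N,
                fderiv ℝ (fun y => DPhi x₀ e κ a₂ a₁ y (EuclideanSpace.single i 1)) z
                  (EuclideanSpace.single i 1) := by
            intro z hz
            exact model_core v (Phi x₀ e κ a₂ a₁ a₀) (DPhi x₀ e κ a₂ a₁) z
              (hasFDerivAt_Phi x₀ e κ a₂ a₁ a₀)
              (fun i => (hasFDerivAt_DPhi_apply x₀ e κ a₂ a₁
                (EuclideanSpace.single i 1) z).differentiableAt)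
              (hdiffv z (hΩH hz)) (hdiffv2 z (hΩH hz))
          have hglap : ∀ z ∈ Ω, 0 < lap g z := by
            intro z hz
            rw [(hmodel z hz).2.2, hharm z (hΩH hz), sum_DPhi, hee]
            simp only [hκdef, ha₂def]
            linarith [mul_pos (lt_of_lt_of_le one_pos hN') hσ0]
          have hgcont : ContinuousOn g (closure Ω) := by
            apply ContinuousOn.add (hcont.mono hclcl)
            apply Continuous.continuousOn
            unfold Phi
            have h1 : Continuous (fun x : Euc N => ⟪x - x₀, x - x₀⟫) :=
              (continuous_id.sub continuous_const).inner (continuous_id.sub continuous_const)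
            exact (continuous_const.mul h1).add
              (((continuous_const.mul (hconte.mul hconte)).add
                (continuous_const.mul hconte)).add continuous_const)
          have hbound : ∀ z ∈ closure Ω \ Ω, g z ≤ σ * R^2 := by
            intro z hzd
            obtain ⟨hzc, hznot⟩ := hzd
            have hu0 : 0 ≤ ⟪z, e⟫ - c := hclH z hzc
            have huT : ⟪z, e⟫ - c ≤ T := hclT z hzc
            have hzB : ‖z - x₀‖ ≤ R := hclB z hzc
            have hS : ⟪z - x₀, z - x₀⟫ = ‖z - x₀‖^2 := real_inner_self_eq_norm_sq _
            have hSR : ⟪z - x₀, z - x₀⟫ ≤ R^2 := by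
              rw [hS]; exact pow_le_pow_left₀ (norm_nonneg _) hzB 2
            have hq1 : ⟪z - x₀, e⟫ = ⟪z, e⟫ - ⟪x₀, e⟫ := inner_sub_left _ _ _
            have hCS : (⟪z, e⟫ - ⟪x₀, e⟫)^2 ≤ ⟪z - x₀, z - x₀⟫ := by
              have h2 : |⟪z - x₀, e⟫| ≤ ‖z - x₀‖ * ‖e‖ := abs_real_inner_le_norm _ _
              rw [he, mul_one] at h2
              rw [← hq1, hS]
              calc ⟪z - x₀, e⟫^2 = |⟪z - x₀, e⟫|^2 := (sq_abs _).symm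
                _ ≤ ‖z - x₀‖^2 := pow_le_pow_left₀ (abs_nonneg _) h2 2
            have hcs2 : (⟪z, e⟫ - ⟪x₀, e⟫)^2 ≤ T^2 := by
              linarith [mul_nonneg (by linarith : (0:ℝ) ≤ T - (⟪z, e⟫ - c) + (⟪x₀, e⟫ - c))
                (by linarith : (0:ℝ) ≤ T + (⟪z, e⟫ - c) - (⟪x₀, e⟫ - c))]
            have huT2 : (⟪z, e⟫ - c)^2 ≤ T^2 := by
              linarith [mul_nonneg (sub_nonneg.2 huT) (by linarith : (0:ℝ) ≤ T + (⟪z, e⟫ - c))]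
            rw [hgsem z]
            have hznot' : (¬ c < ⟪z, e⟫) ∨ (¬ (⟪z, e⟫ - c < T)) ∨ (¬ z ∈ Metric.ball x₀ R) := by
              by_contra hcon
              push_neg at hcon
              exact hznot ⟨⟨hcon.1, hcon.2.1⟩, hcon.2.2⟩
            rcases hznot' with h | h | h
            · push_neg at h
              have hzc0 : ⟪z, e⟫ - c = 0 := by linarith
              have hvz : v z = d := hbdry z (by linarith)
              rw [hvz, hzc0]
              linarith [mul_nonneg hη.le (sub_nonneg.2 hCS),
                mul_nonneg hη.le (mul_nonneg (sub_nonneg.2 hN') (sq_nonneg T)),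
                mul_le_mul_of_nonneg_left hSR hσ0.le]
            · push_neg at h
              have hzT : ⟪z, e⟫ - c = T := by linarith
              have hzH : c < ⟪z, e⟫ := by linarith
              have hA := stepA z hzH
              rw [hzT] at hA
              have hB := stepB ε hε T (le_refl T)
              rw [hzT]
              linarith [mul_nonneg hη.le (sub_nonneg.2 hCS),
                mul_le_mul_of_nonneg_left hSR hσ0.le]
            · have hdist : R ≤ ‖z - x₀‖ := by
                rw [Metric.mem_ball, not_lt, dist_eq_norm] at h
                exact h
              have hSge : R^2 ≤ ⟪z - x₀, z - x₀⟫ := by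
                rw [hS]; exact pow_le_pow_left₀ hR0.le hdist 2
              have hw : v z - d - ε*(⟪z, e⟫ - c) ≤ M := by
                rcases eq_or_lt_of_le hu0 with h0 | h0
                · have hvz : v z = d := hbdry z (by linarith)
                  rw [hvz]
                  linarith [mul_nonneg hε.le hu0]
                · have hA := stepA z (by linarith)
                  have hmono : C * (⟪z, e⟫ - c) ^ α ≤ C * T ^ α :=
                    mul_le_mul_of_nonneg_left (Real.rpow_le_rpow hu0 huT hα.1.le) hC
                  linarith [hA, hmono, mul_nonneg hε.le hu0]
              have hbar : M ≤ η * (⟪z - x₀, z - x₀⟫ - (⟪z, e⟫ - ⟪x₀, e⟫)^2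
                  - ((N:ℝ)-1)*(⟪z, e⟫ - c)^2 + ((N:ℝ)-1)*T^2) := by
                have h1 : R^2 - T^2 ≤ ⟪z - x₀, z - x₀⟫ - (⟪z, e⟫ - ⟪x₀, e⟫)^2
                    - ((N:ℝ)-1)*(⟪z, e⟫ - c)^2 + ((N:ℝ)-1)*T^2 := by
                  linarith [hSge, hcs2,
                    mul_nonneg (sub_nonneg.2 hN') (sub_nonneg.2 huT2)]
                calc M = η * (R^2 - T^2) := hηD.symm
                  _ ≤ _ := mul_le_mul_of_nonneg_left h1 hη.le
              have hσS := mul_le_mul_of_nonneg_left hSR hσ0.le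
              linarith
          have hmax := maxp g Ω hΩopen hΩb x₀ hx₀Ω hgcont
            (fun z hz => (hmodel z hz).1) (fun z hz => (hmodel z hz).2.1) hglap (σ*R^2) hbound
          have h00 : (⟪x₀ - x₀, x₀ - x₀⟫ : ℝ) = 0 := by simp
          have hgx₀ : g x₀ = v x₀ - d - ε*(⟪x₀, e⟫ - c)
              - η * (((N:ℝ)-1)*T^2 - ((N:ℝ)-1)*(⟪x₀, e⟫ - c)^2) := by
            rw [hgsem x₀, h00]; ring
          linarith
        have hσ0lim : v x₀ - d - ε * (⟪x₀, e⟫ - c)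
            - η * (((N:ℝ)-1)*T^2 - ((N:ℝ)-1)*(⟪x₀, e⟫ - c)^2) ≤ 0 := by
          by_contra hcon
          push_neg at hcon
          set L := v x₀ - d - ε * (⟪x₀, e⟫ - c)
            - η * (((N:ℝ)-1)*T^2 - ((N:ℝ)-1)*(⟪x₀, e⟫ - c)^2) with hLdef
          have h1 := hσstep (L/(2*R^2)) (div_pos hcon (by positivity))
          have h2 : (L/(2*R^2)) * R^2 = L/2 := by
            rw [div_mul_eq_mul_div, mul_comm (2:ℝ) (R^2), ← div_div,
              mul_div_assoc, div_self (by positivity : R^2 ≠ (0:ℝ)), mul_one]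
          rw [h2] at h1
          linarith
        have hfin1 : η*(((N:ℝ)-1)*T^2) ≤ δ := by
          rw [hηdef, div_mul_eq_mul_div, div_le_iff₀ hD0]
          have hδD : δ * D = M * N * T^2 + δ := by
            rw [hDdef]
            field_simp
          rw [hδD]
          linarith [mul_nonneg hM0.le (sq_nonneg T), hδ]
        have hfin2 : 0 ≤ η*(((N:ℝ)-1)*(⟪x₀, e⟫ - c)^2) :=
          mul_nonneg hη.le (mul_nonneg (sub_nonneg.2 hN') (sq_nonneg _))
        have hdistr : η * (((N:ℝ)-1)*T^2 - ((N:ℝ)-1)*(⟪x₀, e⟫ - c)^2)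
            = η*(((N:ℝ)-1)*T^2) - η*(((N:ℝ)-1)*(⟪x₀, e⟫ - c)^2) := by ring
        linarith
      by_contra hcon
      push_neg at hcon
      have h1 := hδb ((v x₀ - d - ε*(⟪x₀, e⟫ - c))/2) (by linarith)
      linarith
  by_contra hcon
  push_neg at hcon
  have ht₀ : 0 < ⟪x₀, e⟫ - c := sub_pos.2 hx₀
  have h1 := main ((v x₀ - d)/(2*(⟪x₀, e⟫ - c))) (div_pos (by linarith) (by linarith))
  have h2 : ((v x₀ - d)/(2*(⟪x₀, e⟫ - c))) * (⟪x₀, e⟫ - c) = (v x₀ - d)/2 := by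
    rw [div_mul_eq_mul_div, mul_comm (2:ℝ) (⟪x₀, e⟫ - c), ← div_div,
      mul_div_assoc, div_self (ne_of_gt ht₀), mul_one]
  rw [h2] at h1
  linarith

/-- Liouville on a half-space: a function continuous on the closure of a
half-space `H`, harmonic in `H`, constant on `∂H`, and globally `α`-Hölder
continuous on `H` for some `α ∈ (0,1)`, is constant on `H`. -/
theorem stmt10 (N : ℕ) (hN : 1 ≤ N) (α : ℝ) (hα : α ∈ Set.Ioo (0 : ℝ) 1)
    (e : Euc N) (he : ‖e‖ = 1) (c : ℝ)
    (H : Set (Euc N)) (hHdef : H = {x : Euc N | c < ⟪x, e⟫})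
    (v : Euc N → ℝ)
    (hcont : ContinuousOn v (closure H))
    (hsm : ContDiffOn ℝ 2 v H)
    (hharm : ∀ x ∈ H, lap v x = 0)
    (hbdry : ∃ d : ℝ, ∀ x : Euc N, ⟪x, e⟫ = c → v x = d)
    (hHol : ∃ C : ℝ, ∀ x ∈ H, ∀ y ∈ H, |v x - v y| ≤ C * ‖x - y‖ ^ α) :
    ∀ x ∈ H, ∀ y ∈ H, v x = v y := by
  obtain ⟨d, hd⟩ := hbdry
  obtain ⟨C₀, hC₀⟩ := hHol
  have hC : (0:ℝ) ≤ max C₀ 0 := le_max_right _ _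
  subst hHdef
  have hHol' : ∀ x ∈ {x : Euc N | c < ⟪x, e⟫}, ∀ y ∈ {x : Euc N | c < ⟪x, e⟫},
      v x - v y ≤ (max C₀ 0) * ‖x - y‖ ^ α := by
    intro x hx y hy
    have h2 : |v x - v y| ≤ C₀ * ‖x - y‖ ^ α := hC₀ x hx y hy
    have h3 : C₀ * ‖x - y‖ ^ α ≤ (max C₀ 0) * ‖x - y‖ ^ α :=
      mul_le_mul_of_nonneg_right (le_max_left _ _) (Real.rpow_nonneg (norm_nonneg _) α)
    calc v x - v y ≤ |v x - v y| := le_abs_self _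
      _ ≤ _ := le_trans h2 h3
  have hle : ∀ x ∈ {x : Euc N | c < ⟪x, e⟫}, v x ≤ d := fun x hx =>
    key_s10 hN hα e he c v hcont hsm hharm d hd (max C₀ 0) hC hHol' x hx
  have hcont2 : ContinuousOn (fun x => 2*d - v x) (closure {x : Euc N | c < ⟪x, e⟫}) :=
    continuousOn_const.sub hcont
  have hsm2 : ContDiffOn ℝ 2 (fun x => 2*d - v x) {x : Euc N | c < ⟪x, e⟫} :=
    contDiffOn_const.sub hsm
  have hharm2 : ∀ x ∈ {x : Euc N | c < ⟪x, e⟫}, lap (fun x => 2*d - v x) x = 0 := by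
    intro x hx
    rw [lap_const_sub, hharm x hx, neg_zero]
  have hbdry2 : ∀ x : Euc N, ⟪x, e⟫ = c → (fun x => 2*d - v x) x = d := by
    intro x hx
    simp only
    rw [hd x hx]
    ring
  have hHol2 : ∀ x ∈ {x : Euc N | c < ⟪x, e⟫}, ∀ y ∈ {x : Euc N | c < ⟪x, e⟫},
      (fun x => 2*d - v x) x - (fun x => 2*d - v x) y ≤ (max C₀ 0) * ‖x - y‖ ^ α := by
    intro x hx y hy
    have h1 := hHol' y hy x hx
    rw [norm_sub_rev y x] at h1
    simp only
    linarith
  have hge : ∀ x ∈ {x : Euc N | c < ⟪x, e⟫}, d ≤ v x := by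
    intro x hx
    have h2 := key_s10 hN hα e he c (fun x => 2*d - v x) hcont2 hsm2 hharm2 d hbdry2
      (max C₀ 0) hC hHol2 x hx
    linarith
  intro x hx y hy
  have h1 := hle x hx
  have h2 := hge x hx
  have h3 := hle y hy
  have h4 := hge y hy
  linarith
end
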